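/- In a star bar category, define Γ_{Y,X}: X⊗Y → Y⊗X by Υ⁻¹ ∘ (⋆⊗⋆) ∘ Γ_{Y,X} = ⋆_{X⊗Y}. Then the coboundary Ξ satisfies Ξ_{X,Y} = Γ_{X,Y} ∘ Γ_{Y,X} (i.e. Ξ = Γ²). -/

import Mathlib

open CategoryTheory MonoidalCategory

universe v u

/-- A bar category (Beggs–Majid): monoidal category with bar functor, `bb`, `⋆` and `Υ`
satisfying axioms a)–d). -/
structure BarCategoryStruct (C : Type u) [Category.{v} C] [MonoidalCategory C] where
  bar : C ⥤ C
  bb : 𝟭 C ≅ bar ⋙ bar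
  star : 𝟙_ C ≅ bar.obj (𝟙_ C)
  Upsilon : ∀ X Y : C, bar.obj (X ⊗ Y) ≅ bar.obj Y ⊗ bar.obj X
  upsilon_natural : ∀ {X Y X' Y' : C} (θ : X ⟶ X') (φ : Y ⟶ Y'),
    bar.map (θ ⊗ₘ φ) ≫ (Upsilon X' Y').hom =
      (Upsilon X Y).hom ≫ (bar.map φ ⊗ₘ bar.map θ)
  axiom_a1 : ∀ X : C,
    bar.map (ρ_ X).inv ≫ (Upsilon X (𝟙_ C)).hom ≫ (star.inv ⊗ₘ 𝟙 (bar.obj X)) =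
      (λ_ (bar.obj X)).inv
  axiom_a2 : ∀ X : C,
    bar.map (λ_ X).inv ≫ (Upsilon (𝟙_ C) X).hom ≫ (𝟙 (bar.obj X) ⊗ₘ star.inv) =
      (ρ_ (bar.obj X)).inv
  axiom_b : ∀ X Y Z : C,
    bar.map (α_ X Y Z).hom ≫ (Upsilon X (Y ⊗ Z)).hom ≫
        ((Upsilon Y Z).hom ⊗ₘ 𝟙 (bar.obj X)) ≫
        (α_ (bar.obj Z) (bar.obj Y) (bar.obj X)).hom =
      (Upsilon (X ⊗ Y) Z).hom ≫ (𝟙 (bar.obj Z) ⊗ₘ (Upsilon X Y).hom)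
  axiom_c : star.hom ≫ bar.map star.hom = bb.hom.app (𝟙_ C)
  axiom_d : ∀ X : C, bar.map (bb.hom.app X) = bb.hom.app (bar.obj X)

variable {C : Type u} [Category.{v} C] [MonoidalCategory C]

/-- The coboundary natural isomorphism `Ξ_{X,Y}` of a bar category, defined by
`(bb_X ⊗ bb_Y) ∘ Ξ_{X,Y} = Υ_{Ȳ,X̄} ∘ (Υ_{X,Y})‾ ∘ bb_{X⊗Y}`. -/
def BarCategoryStruct.Xi (B : BarCategoryStruct C) (X Y : C) : X ⊗ Y ⟶ X ⊗ Y :=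
  B.bb.hom.app (X ⊗ Y) ≫ B.bar.map (B.Upsilon X Y).hom ≫
    (B.Upsilon (B.bar.obj Y) (B.bar.obj X)).hom ≫ (B.bb.inv.app X ⊗ₘ B.bb.inv.app Y)

/-- In a star bar category, with the natural isomorphism `Γ_{Y,X} : X ⊗ Y ⟶ Y ⊗ X` defined
by `Υ⁻¹ ∘ (⋆ ⊗ ⋆) ∘ Γ_{Y,X} = ⋆_{X⊗Y}`, the coboundary satisfies `Ξ = Γ²`, i.e.
`Ξ_{X,Y} = Γ_{X,Y} ∘ Γ_{Y,X}`.  (Here `Γ X Y : X ⊗ Y ⟶ Y ⊗ X` denotes the paper's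
`Γ_{Y,X}`.) -/
theorem star_bar_category_Xi_eq_Gamma_sq (B : BarCategoryStruct C)
    (st : 𝟭 C ⟶ B.bar) [∀ X : C, IsIso (st.app X)]
    (hstarobj : ∀ X : C, st.app X ≫ B.bar.map (st.app X) = B.bb.hom.app X)
    (hassoc : ∀ X Y Z : C,
      (α_ X Y Z).hom ≫ st.app (X ⊗ (Y ⊗ Z)) =
        st.app ((X ⊗ Y) ⊗ Z) ≫ B.bar.map (α_ X Y Z).hom)
    (Γ : ∀ X Y : C, X ⊗ Y ⟶ Y ⊗ X)
    (hΓiso : ∀ X Y : C, IsIso (Γ X Y))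
    (hΓnat : ∀ {X Y X' Y' : C} (f : X ⟶ X') (g : Y ⟶ Y'),
      (f ⊗ₘ g) ≫ Γ X' Y' = Γ X Y ≫ (g ⊗ₘ f))
    (hΓdef : ∀ X Y : C,
      Γ X Y ≫ (st.app Y ⊗ₘ st.app X) ≫ (B.Upsilon X Y).inv = st.app (X ⊗ Y)) :
    ∀ X Y : C, B.Xi X Y = Γ X Y ≫ Γ Y X := by
  intro X Y
  have hdef : ∀ A B' : C, st.app (A ⊗ B') ≫ (B.Upsilon A B').hom
      = Γ A B' ≫ (st.app B' ⊗ₘ st.app A) := by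
    intro A B'
    rw [← hΓdef A B']
    simp
  have hnat : st.app (X ⊗ Y) ≫ B.bar.map (Γ X Y) = Γ X Y ≫ st.app (Y ⊗ X) := by
    simpa using (st.naturality (Γ X Y)).symm
  show B.bb.hom.app (X ⊗ Y) ≫ B.bar.map (B.Upsilon X Y).hom ≫
      (B.Upsilon (B.bar.obj Y) (B.bar.obj X)).hom ≫ (B.bb.inv.app X ⊗ₘ B.bb.inv.app Y) = _
  rw [← hstarobj (X ⊗ Y), Category.assoc, ← B.bar.map_comp_assoc, hdef X Y,
    B.bar.map_comp_assoc, reassoc_of% hnat,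
    reassoc_of% (B.upsilon_natural (st.app Y) (st.app X)),
    reassoc_of% (hdef Y X), tensorHom_comp_tensorHom_assoc, hstarobj, hstarobj,
    tensorHom_comp_tensorHom, Iso.hom_inv_id_app, Iso.hom_inv_id_app]
  simp
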